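/- arXiv:2211.08757 — 4 statements merged into one kernel-verified Lean document; each statement's English description precedes it below -/
import Mathlib

section
/- For every q ∈ ℂ and every real c > 0, the infimum over δ ∈ ℂ and ω ∈ (0, ∞) of ω·(|1 − δ·q|² + c·|δ|²) − log ω − 1 equals −log(1 + |q|²/c), and this infimum is attained at δ* = conj(q)/(|q|² + c) and ω* = 1 + |q|²/c. -/
lemma e_lower (q δ : ℂ) (c : ℝ) (hc : 0 < c) :
    c / (‖q‖ ^ 2 + c) ≤
      ‖1 - δ * q‖ ^ 2 + c * ‖δ‖ ^ 2 := by
  have hs : 0 < ‖q‖ ^ 2 + c := by positivity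
  rw [div_le_iff₀ hs]
  have h1 : ‖1 - δ * q‖ ^ 2 = Complex.normSq (1 - δ * q) :=
    (Complex.sq_norm _).symm ▸ rfl
  have h2 : ‖δ‖ ^ 2 = Complex.normSq δ := Complex.sq_norm δ
  have h3 : ‖q‖ ^ 2 = Complex.normSq q := Complex.sq_norm q
  rw [Complex.sq_norm, Complex.sq_norm, Complex.sq_norm]
  simp only [Complex.normSq_apply, Complex.sub_re, Complex.sub_im, Complex.one_re,
    Complex.one_im, Complex.mul_re, Complex.mul_im]
  set a := q.re; set b := q.im; set x := δ.re; set y := δ.im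
  nlinarith [sq_nonneg ((a^2+b^2+c)*x - a), sq_nonneg ((a^2+b^2+c)*y + b),
    sq_nonneg (x*a - y*b), sq_nonneg (x*b + y*a), sq_nonneg x, sq_nonneg y, hc.le]

/-- For every `q ∈ ℂ` and real `c > 0`, the infimum over `δ ∈ ℂ` and `ω ∈ (0,∞)` of
`ω·(|1 − δq|² + c|δ|²) − log ω − 1` equals `−log(1 + |q|²/c)`, attained at
`δ* = conj(q)/(|q|² + c)` and `ω* = 1 + |q|²/c`. -/
theorem stmt_2 (q : ℂ) (c : ℝ) (hc : 0 < c)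
    (F : ℂ → ℝ → ℝ)
    (hF : ∀ (δ : ℂ) (ω : ℝ),
      F δ ω = ω * (‖1 - δ * q‖ ^ 2 + c * ‖δ‖ ^ 2) - Real.log ω - 1)
    (δstar : ℂ) (hδ : δstar = (starRingEnd ℂ) q / ((‖q‖ ^ 2 + c : ℝ) : ℂ))
    (ωstar : ℝ) (hω : ωstar = 1 + ‖q‖ ^ 2 / c) :
    (∀ (δ : ℂ) (ω : ℝ), 0 < ω → -Real.log (1 + ‖q‖ ^ 2 / c) ≤ F δ ω) ∧
      0 < ωstar ∧
      F δstar ωstar = -Real.log (1 + ‖q‖ ^ 2 / c) := by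
  have hs : 0 < ‖q‖ ^ 2 + c := by positivity
  have hrat : 1 + ‖q‖ ^ 2 / c = (‖q‖ ^ 2 + c) / c := by
    field_simp; ring
  have hωpos : 0 < ωstar := by
    rw [hω]; positivity
  refine ⟨?_, hωpos, ?_⟩
  · intro δ ω hωp
    rw [hF]
    obtain ⟨e, he⟩ : ∃ e, ‖1 - δ * q‖ ^ 2 + c * ‖δ‖ ^ 2 = e := ⟨_, rfl⟩
    rw [he]
    rw [eq_comm] at he
    have hel : c / (‖q‖ ^ 2 + c) ≤ e := he ▸ e_lower q δ c hc
    have hep : 0 < e := lt_of_lt_of_le (by positivity) hel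
    have hlog1 : Real.log (ω * e) ≤ ω * e - 1 :=
      Real.log_le_sub_one_of_pos (by positivity)
    have hlog2 : Real.log (ω * e) = Real.log ω + Real.log e :=
      Real.log_mul (ne_of_gt hωp) (ne_of_gt hep)
    have hlog3 : Real.log (c / (‖q‖ ^ 2 + c)) ≤ Real.log e :=
      Real.log_le_log (by positivity) hel
    have hlog4 : Real.log (c / (‖q‖ ^ 2 + c))
        = - Real.log (1 + ‖q‖ ^ 2 / c) := by
      rw [hrat, Real.log_div (ne_of_gt hc) (ne_of_gt hs),
        Real.log_div (ne_of_gt hs) (ne_of_gt hc)]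
      ring
    linarith
  · have hsC : ((‖q‖ ^ 2 + c : ℝ) : ℂ) ≠ 0 := by
      exact_mod_cast ne_of_gt hs
    have h1 : 1 - δstar * q = ((c / (‖q‖ ^ 2 + c) : ℝ) : ℂ) := by
      have hne2 : ((‖q‖ : ℂ)) ^ 2 + (c : ℂ) ≠ 0 := by
        exact_mod_cast hsC
      rw [hδ, div_mul_eq_mul_div, mul_comm, Complex.mul_conj, Complex.normSq_eq_norm_sq]
      push_cast
      field_simp
      ring
    have habs1 : ‖1 - δstar * q‖ ^ 2 = (c / (‖q‖ ^ 2 + c)) ^ 2 := by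
      rw [h1, Complex.norm_real, Real.norm_eq_abs, abs_of_pos (by positivity)]
    have habs2 : ‖δstar‖ = ‖q‖ / (‖q‖ ^ 2 + c) := by
      rw [hδ, norm_div, Complex.norm_conj, Complex.norm_real, Real.norm_eq_abs, abs_of_pos hs]
    have he : ‖1 - δstar * q‖ ^ 2 + c * ‖δstar‖ ^ 2
        = c / (‖q‖ ^ 2 + c) := by
      rw [habs1, habs2]
      field_simp
      ring
    rw [hF, he, hω, hrat]
    rw [Real.log_div (ne_of_gt hs) (ne_of_gt hc)]
    field_simp
    ring
end

section
/- Fix M ≥ 1, complex numbers q_{m,j} for m, j ∈ {1,…,M}, and σ > 0. For each m let c_m = Σ_{j≠m} |q_{m,j}|² + σ², Γ_m = |q_{m,m}|²/c_m, and for δ ∈ ℂ let e_m(δ) = |1 − δ·q_{m,m}|² + |δ|²·c_m. Then the infimum over δ ∈ ℂ^M and ω ∈ (0,∞)^M of Σ_{m=1}^M (ω_m·e_m(δ_m) − log ω_m − 1) equals −Σ_{m=1}^M log(1 + Γ_m), and it is attained. -/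
open Finset

/-- Fixed `M ≥ 1`, coefficients `q m j`, noise `σ > 0`: with
`c m = ∑_{j≠m} |q m j|² + σ²`, `Γ m = |q m m|²/c m`, and
`e_m(δ) = |1 − δ·q m m|² + |δ|²·c m`, the infimum over `δ ∈ ℂ^M` and `ω ∈ (0,∞)^M` of
`∑ m (ω m · e_m(δ m) − log (ω m) − 1)` equals `−∑ m log(1 + Γ m)` and is attained. -/
theorem stmt_3 (M : ℕ) (hM : 1 ≤ M) (q : Fin M → Fin M → ℂ) (σ : ℝ) (hσ : 0 < σ)
    (c : Fin M → ℝ)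
    (hc : ∀ m, c m = ∑ j ∈ univ.erase m, ‖q m j‖ ^ 2 + σ ^ 2)
    (Γ : Fin M → ℝ) (hΓ : ∀ m, Γ m = ‖q m m‖ ^ 2 / c m)
    (e : Fin M → ℂ → ℝ)
    (he : ∀ m δ, e m δ = ‖1 - δ * q m m‖ ^ 2 + ‖δ‖ ^ 2 * c m) :
    ∃ (δs : Fin M → ℂ) (ωs : Fin M → ℝ),
      (∀ m, 0 < ωs m) ∧
      (∑ m, (ωs m * e m (δs m) - Real.log (ωs m) - 1)) = -∑ m, Real.log (1 + Γ m) ∧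
      ∀ (δ : Fin M → ℂ) (ω : Fin M → ℝ), (∀ m, 0 < ω m) →
        -∑ m, Real.log (1 + Γ m) ≤ ∑ m, (ω m * e m (δ m) - Real.log (ω m) - 1) := by
  have habs : ∀ z : ℂ, ‖z‖ ^ 2 = z.re ^ 2 + z.im ^ 2 := by
    intro z; rw [Complex.sq_norm, Complex.normSq_apply]; ring
  have hcpos : ∀ m, 0 < c m := by
    intro m; rw [hc]
    have h : (0:ℝ) ≤ ∑ j ∈ univ.erase m, ‖q m j‖ ^ 2 :=
      Finset.sum_nonneg fun j _ => by positivity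
    nlinarith
  set Q : Fin M → ℝ := fun m => (q m m).re ^ 2 + (q m m).im ^ 2 with hQdef
  have hQnn : ∀ m, 0 ≤ Q m := fun m => by positivity
  have hCQ : ∀ m, 0 < c m + Q m := fun m => by nlinarith [hcpos m, hQnn m]
  have he' : ∀ m (δ : ℂ), e m δ =
      (1 - (δ.re * (q m m).re - δ.im * (q m m).im)) ^ 2
      + (δ.re * (q m m).im + δ.im * (q m m).re) ^ 2
      + (δ.re ^ 2 + δ.im ^ 2) * c m := by
    intro m δ
    rw [he, habs, habs]
    simp [Complex.sub_re, Complex.sub_im, Complex.mul_re, Complex.mul_im]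
    ring
  have hΓ' : ∀ m, 1 + Γ m = (c m + Q m) / c m := by
    intro m
    simp only [hQdef]
    rw [hΓ, habs, eq_div_iff (hcpos m).ne', add_mul, div_mul_cancel₀ _ (hcpos m).ne']
    ring
  have hΓpos : ∀ m, 0 < 1 + Γ m := by
    intro m; rw [hΓ' m]; exact div_pos (hCQ m) (hcpos m)
  have hlow : ∀ m (δ : ℂ), c m / (c m + Q m) ≤ e m δ := by
    intro m δ
    rw [he', div_le_iff₀ (hCQ m)]
    simp only [hQdef]
    nlinarith [sq_nonneg ((c m + ((q m m).re ^ 2 + (q m m).im ^ 2)) * δ.re - (q m m).re),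
      sq_nonneg ((c m + ((q m m).re ^ 2 + (q m m).im ^ 2)) * δ.im + (q m m).im)]
  have hemin_pos : ∀ m, 0 < c m / (c m + Q m) := fun m => div_pos (hcpos m) (hCQ m)
  have hlogmin : ∀ m, Real.log (c m / (c m + Q m)) = -(Real.log (1 + Γ m)) := by
    intro m
    rw [hΓ' m, Real.log_div (hcpos m).ne' (hCQ m).ne',
      Real.log_div (hCQ m).ne' (hcpos m).ne']
    ring
  refine ⟨fun m => ⟨(q m m).re / (c m + Q m), -(q m m).im / (c m + Q m)⟩,
    fun m => 1 + Γ m, hΓpos, ?_, ?_⟩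
  · have hterm : ∀ m : Fin M,
        (1 + Γ m) * e m ⟨(q m m).re / (c m + Q m), -(q m m).im / (c m + Q m)⟩
          - Real.log (1 + Γ m) - 1 = -(Real.log (1 + Γ m)) := by
      intro m
      have heval : e m ⟨(q m m).re / (c m + Q m), -(q m m).im / (c m + Q m)⟩
          = c m / (c m + Q m) := by
        rw [he']
        show (1 - ((q m m).re / (c m + Q m) * (q m m).re -
            -(q m m).im / (c m + Q m) * (q m m).im)) ^ 2
          + ((q m m).re / (c m + Q m) * (q m m).im +
            -(q m m).im / (c m + Q m) * (q m m).re) ^ 2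
          + (((q m m).re / (c m + Q m)) ^ 2 + (-(q m m).im / (c m + Q m)) ^ 2) * c m
          = c m / (c m + Q m)
        have h := (hCQ m).ne'
        field_simp [hQdef]
        ring
      rw [heval, hΓ' m]
      have h1 := (hcpos m).ne'
      have h2 := (hCQ m).ne'
      field_simp
      ring
    calc ∑ m, ((1 + Γ m) * e m ⟨(q m m).re / (c m + Q m), -(q m m).im / (c m + Q m)⟩
            - Real.log (1 + Γ m) - 1)
        = ∑ m, -(Real.log (1 + Γ m)) := Finset.sum_congr rfl fun m _ => hterm m
      _ = -∑ m, Real.log (1 + Γ m) := by rw [Finset.sum_neg_distrib]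
  · intro δ ω hω
    rw [← Finset.sum_neg_distrib]
    refine Finset.sum_le_sum fun m _ => ?_
    have hepos : 0 < e m (δ m) := lt_of_lt_of_le (hemin_pos m) (hlow m (δ m))
    have h1 : Real.log (ω m * e m (δ m)) ≤ ω m * e m (δ m) - 1 :=
      Real.log_le_sub_one_of_pos (mul_pos (hω m) hepos)
    rw [Real.log_mul (hω m).ne' hepos.ne'] at h1
    have h2 : Real.log (c m / (c m + Q m)) ≤ Real.log (e m (δ m)) :=
      Real.log_le_log (hemin_pos m) (hlow m (δ m))
    rw [hlogmin m] at h2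
    linarith
end

section
/- Let S be any nonempty set, and for each s ∈ S and m ∈ {1,…,M} let q_{m,j}(s) ∈ ℂ (j ∈ {1,…,M}) be given, with σ > 0. Define c_m(s) = Σ_{j≠m} |q_{m,j}(s)|² + σ², Γ_m(s) = |q_{m,m}(s)|²/c_m(s), and e_m(s, δ) = |1 − δ·q_{m,m}(s)|² + |δ|²·c_m(s). If the supremum over s ∈ S of Σ_m log(1 + Γ_m(s)) is finite, then sup_{s ∈ S} Σ_{m=1}^M log(1 + Γ_m(s)) = − inf_{s ∈ S, δ ∈ ℂ^M, ω ∈ (0,∞)^M} Σ_{m=1}^M (ω_m·e_m(s, δ_m) − log ω_m − 1), and s* attains the supremum if and only if there exist δ*, ω* such that (s*, δ*, ω*) attains the infimum. -/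
open Finset


lemma aux_e_lb (b r cm : ℝ) (hc : 0 < cm) :
    cm / (b ^ 2 + cm) ≤ (1 - r * b) ^ 2 + r ^ 2 * cm := by
  rw [div_le_iff₀ (by positivity)]
  nlinarith [sq_nonneg (b - r * b ^ 2 - r * cm)]

lemma aux_log (t ω : ℝ) (ht : 0 < t) (hω : 0 < ω) :
    Real.log t ≤ ω * t - Real.log ω - 1 := by
  have h := Real.log_le_sub_one_of_pos (mul_pos hω ht)
  rw [Real.log_mul hω.ne' ht.ne'] at h
  linarith

/-- Theorem 1 of the paper, in abstract form. `S` is the (nonempty) set of feasible joint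
designs, `q s m j` the effective coefficients, `σ > 0` the noise level. With
`c s m = ∑_{j≠m} |q s m j|² + σ²`, `Γ s m = |q s m m|²/(c s m)`,
`e s m δ = |1 − δ·q s m m|² + |δ|²·c s m`, the sum rate `R s = ∑ m log(1 + Γ s m)` and
the weighted-MMSE objective `g s δ ω = ∑ m (ω m · e s m (δ m) − log (ω m) − 1)`: if the
supremum of `R` is finite then `sup R = − inf g` (infimum over `s`, `δ`, and positive `ω`),
and `s*` attains the supremum iff some `(s*, δ*, ω*)` attains the infimum. -/
theorem stmt_4 {S : Type*} [Nonempty S] (M : ℕ) (hM : 1 ≤ M)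
    (q : S → Fin M → Fin M → ℂ) (σ : ℝ) (hσ : 0 < σ)
    (c : S → Fin M → ℝ)
    (hc : ∀ s m, c s m = ∑ j ∈ univ.erase m, ‖q s m j‖ ^ 2 + σ ^ 2)
    (Γ : S → Fin M → ℝ) (hΓ : ∀ s m, Γ s m = ‖q s m m‖ ^ 2 / c s m)
    (e : S → Fin M → ℂ → ℝ)
    (he : ∀ s m δ, e s m δ = ‖1 - δ * q s m m‖ ^ 2 + ‖δ‖ ^ 2 * c s m)
    (R : S → ℝ) (hR : ∀ s, R s = ∑ m, Real.log (1 + Γ s m))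
    (g : S → (Fin M → ℂ) → (Fin M → ℝ) → ℝ)
    (hg : ∀ s δ ω, g s δ ω = ∑ m, (ω m * e s m (δ m) - Real.log (ω m) - 1))
    (hfin : BddAbove (Set.range R)) :
    sSup (Set.range R) =
      -sInf {y : ℝ | ∃ (s : S) (δ : Fin M → ℂ) (ω : Fin M → ℝ),
        (∀ m, 0 < ω m) ∧ y = g s δ ω} ∧
    ∀ sstar : S,
      ((∀ s : S, R s ≤ R sstar) ↔
        ∃ (δstar : Fin M → ℂ) (ωstar : Fin M → ℝ),
          (∀ m, 0 < ωstar m) ∧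
          ∀ (s : S) (δ : Fin M → ℂ) (ω : Fin M → ℝ), (∀ m, 0 < ω m) →
            g sstar δstar ωstar ≤ g s δ ω) := by
  -- positivity facts
  have hc0 : ∀ s m, 0 < c s m := by
    intro s m; rw [hc]
    have : (0:ℝ) ≤ ∑ j ∈ univ.erase m, ‖q s m j‖ ^ 2 :=
      Finset.sum_nonneg fun j _ => by positivity
    nlinarith
  have hΓ0 : ∀ s m, 0 ≤ Γ s m := by
    intro s m; rw [hΓ]; exact div_nonneg (by positivity) (hc0 s m).le
  have h1Γ : ∀ s m, 0 < 1 + Γ s m := fun s m => by linarith [hΓ0 s m]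
  -- key identity : 1/(1+Γ) = c/(a+c)
  have hinv : ∀ s m, 1 / (1 + Γ s m)
      = c s m / (‖q s m m‖ ^ 2 + c s m) := by
    intro s m
    rw [hΓ, one_add_div (hc0 s m).ne', one_div_div, add_comm]
  -- lower bound on e
  have he_lb : ∀ s m δ, 1 / (1 + Γ s m) ≤ e s m δ := by
    intro s m δ
    rw [hinv, he]
    have h2 : |‖(1:ℂ)‖ - ‖δ * q s m m‖|
        ≤ ‖1 - δ * q s m m‖ :=
      abs_norm_sub_norm_le 1 (δ * q s m m)
    rw [norm_one, norm_mul] at h2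
    obtain ⟨h2a, h2b⟩ := abs_le.mp h2
    have h3 : (1 - ‖δ‖ * ‖q s m m‖) ^ 2
        ≤ ‖1 - δ * q s m m‖ ^ 2 := sq_le_sq' h2a h2b
    have h4 := aux_e_lb ‖q s m m‖ ‖δ‖ (c s m) (hc0 s m)
    linarith
  -- the optimal receive coefficient and weights
    /- δ* = conj q /(a+c), ω* = 1+Γ -/
  set dstar : S → Fin M → ℂ := fun s m =>
    (starRingEnd ℂ) (q s m m) / ((‖q s m m‖ ^ 2 + c s m : ℝ) : ℂ) with hdstar
  set wstar : S → Fin M → ℝ := fun s m => 1 + Γ s m with hwstar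
  have hwpos : ∀ s m, 0 < wstar s m := fun s m => h1Γ s m
  have he_eq : ∀ s m, e s m (dstar s m) = 1 / (1 + Γ s m) := by
    intro s m
    have ha : (0:ℝ) ≤ ‖q s m m‖ ^ 2 := by positivity
    have hac : (0:ℝ) < ‖q s m m‖ ^ 2 + c s m := by linarith [hc0 s m]
    rw [hinv, he, hdstar]
    simp only
    have h1 : (1 : ℂ) - (starRingEnd ℂ) (q s m m) / ((‖q s m m‖ ^ 2 + c s m : ℝ) : ℂ)
        * q s m m = ((c s m / (‖q s m m‖ ^ 2 + c s m) : ℝ) : ℂ) := by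
      rw [div_mul_eq_mul_div, mul_comm ((starRingEnd ℂ) (q s m m)) (q s m m),
        Complex.mul_conj, Complex.normSq_eq_norm_sq]
      push_cast
      rw [eq_div_iff (by exact_mod_cast hac.ne'), sub_mul, div_mul_cancel₀]
      · ring
      · exact_mod_cast hac.ne'
    rw [h1, Complex.norm_real, Real.norm_eq_abs, abs_of_nonneg (div_nonneg (hc0 s m).le hac.le),
      norm_div, Complex.norm_conj, Complex.norm_real, Real.norm_eq_abs, abs_of_nonneg hac.le, div_pow]
    field_simp
    ring
  -- lower bound : -R s ≤ g s δ ω for positive ω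
  have hg_lb : ∀ (s : S) (δ : Fin M → ℂ) (ω : Fin M → ℝ), (∀ m, 0 < ω m) →
      -R s ≤ g s δ ω := by
    intro s δ ω hω
    rw [hR, hg, ← Finset.sum_neg_distrib]
    refine Finset.sum_le_sum fun m _ => ?_
    have hepos : 0 < e s m (δ m) := lt_of_lt_of_le (one_div_pos.mpr (h1Γ s m)) (he_lb s m (δ m))
    have h1 : Real.log (e s m (δ m)) ≤ ω m * e s m (δ m) - Real.log (ω m) - 1 :=
      aux_log _ _ hepos (hω m)
    have h2 : Real.log (1 / (1 + Γ s m)) ≤ Real.log (e s m (δ m)) :=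
      Real.log_le_log (one_div_pos.mpr (h1Γ s m)) (he_lb s m (δ m))
    rw [Real.log_div one_ne_zero (h1Γ s m).ne', Real.log_one] at h2
    linarith
  -- attainment : g s (dstar s) (wstar s) = -R s
  have hg_eq : ∀ s : S, g s (dstar s) (wstar s) = -R s := by
    intro s
    rw [hR, hg, ← Finset.sum_neg_distrib]
    refine Finset.sum_congr rfl fun m _ => ?_
    rw [he_eq s m, hwstar]
    simp only
    rw [mul_one_div, div_self (h1Γ s m).ne']
    ring
  -- the feasible set of the WMMSE problem
  set T : Set ℝ := {y : ℝ | ∃ (s : S) (δ : Fin M → ℂ) (ω : Fin M → ℝ),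
      (∀ m, 0 < ω m) ∧ y = g s δ ω} with hT
  have hmemT : ∀ s : S, -R s ∈ T := fun s =>
    ⟨s, dstar s, wstar s, hwpos s, (hg_eq s).symm⟩
  have hTne : T.Nonempty := ⟨-R (Classical.arbitrary S), hmemT _⟩
  have hRne : (Set.range R).Nonempty := Set.range_nonempty R
  have hlowT : ∀ y ∈ T, -sSup (Set.range R) ≤ y := by
    rintro y ⟨s, δ, ω, hω, rfl⟩
    have h1 : R s ≤ sSup (Set.range R) := le_csSup hfin ⟨s, rfl⟩
    have h2 := hg_lb s δ ω hω
    linarith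
  have hbddT : BddBelow T := ⟨-sSup (Set.range R), hlowT⟩
  have hsinf : sInf T = -sSup (Set.range R) := by
    apply le_antisymm
    · rw [le_neg]
      refine csSup_le hRne ?_
      rintro y ⟨s, rfl⟩
      have := csInf_le hbddT (hmemT s)
      linarith
    · exact le_csInf hTne hlowT
  constructor
  · rw [hsinf, neg_neg]
  · intro sstar
    constructor
    · intro hs
      refine ⟨dstar sstar, wstar sstar, hwpos sstar, fun s δ ω hω => ?_⟩
      have h1 := hg_lb s δ ω hω
      have h2 := hs s
      rw [hg_eq sstar]
      linarith
    · rintro ⟨δstar, ωstar, hωstar, hmin⟩ s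
      have h1 := hmin s (dstar s) (wstar s) (hwpos s)
      rw [hg_eq s] at h1
      have h2 := hg_lb sstar δstar ωstar hωstar
      linarith
end

section
/- Let N ≥ M ≥ 1, σ > 0, P > 0, let W be the N×N matrix with entries W_{n,k} = exp(−2πi·n·k/N), let A be an N×M binary matrix satisfying (C1) and (C2), let U ∈ ℂ^{M×M} with trace(U^H U) ≤ P, and let h̃_1,…,h̃_M ∈ ℂ^N. For each m set q_{m,j} = h̃_m^H W A u_j, c_m = Σ_{j≠m}|q_{m,j}|² + σ², and e_m(δ) = |1 − δ·q_{m,m}|² + |δ|²·c_m. Then for every δ ∈ ℂ^M and ω ∈ (0,∞)^M, Σ_{m=1}^M (ω_m·e_m(δ_m) − log ω_m − 1) ≥ −Σ_{m=1}^M log(1 + N·‖h̃_m‖²·P/σ²). -/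
open Finset

lemma dft_orth (N : ℕ) (hN : 0 < N) (W : Matrix (Fin N) (Fin N) ℂ)
    (hW : ∀ n k : Fin N,
      W n k = Complex.exp (-(2 * Real.pi * Complex.I * (n : ℕ) * (k : ℕ)) / (N : ℂ)))
    (a b : Fin N) :
    ∑ n : Fin N, W n a * (starRingEnd ℂ) (W n b) = if a = b then (N : ℂ) else 0 := by
  have hNc : (N : ℂ) ≠ 0 := Nat.cast_ne_zero.mpr hN.ne'
  set d : ℤ := ((b : ℕ) : ℤ) - ((a : ℕ) : ℤ) with hd
  set ζ : ℂ := Complex.exp (2 * Real.pi * Complex.I * (d : ℂ) / (N : ℂ)) with hζ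
  have hterm : ∀ n : Fin N, W n a * (starRingEnd ℂ) (W n b) = ζ ^ (n : ℕ) := by
    intro n
    rw [hW, hW, ← Complex.exp_conj, ← Complex.exp_add, hζ, ← Complex.exp_nat_mul]
    congr 1
    have : (starRingEnd ℂ) (-(2 * Real.pi * Complex.I * (n : ℕ) * (b : ℕ)) / (N : ℂ))
        = (2 * Real.pi * Complex.I * (n : ℕ) * (b : ℕ)) / (N : ℂ) := by
      simp only [map_div₀, map_neg, map_mul, Complex.conj_I, Complex.conj_ofReal,
        Complex.conj_natCast, map_ofNat]
      ring
    rw [this, hd]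
    push_cast
    ring
  simp_rw [hterm]
  rw [Fin.sum_univ_eq_sum_range (fun n => ζ ^ n) N]
  by_cases hab : a = b
  · subst hab
    simp [hζ, hd]
  · rw [if_neg hab]
    have hζN : ζ ^ N = 1 := by
      rw [hζ, ← Complex.exp_nat_mul]
      have h2 : (N : ℂ) * (2 * Real.pi * Complex.I * (d : ℂ) / (N : ℂ))
          = (d : ℂ) * (2 * Real.pi * Complex.I) := by field_simp
      rw [h2, Complex.exp_int_mul_two_pi_mul_I]
    have hζ1 : ζ ≠ 1 := by
      rw [hζ, Ne, Complex.exp_eq_one_iff]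
      rintro ⟨k, hk⟩
      have h2πI : (2 * (Real.pi : ℂ) * Complex.I) ≠ 0 := by
        simp [Real.pi_ne_zero, Complex.I_ne_zero, Complex.ofReal_ne_zero]
      have hk' : (d : ℂ) = ((k * N : ℤ) : ℂ) := by
        have : (2 * (Real.pi : ℂ) * Complex.I) * (d : ℂ)
            = (2 * (Real.pi : ℂ) * Complex.I) * ((k * N : ℤ) : ℂ) := by
          field_simp at hk
          push_cast
          linear_combination (2 * (Real.pi : ℂ) * Complex.I) * hk
        exact mul_left_cancel₀ h2πI this
      have hdk : d = k * N := by exact_mod_cast hk'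
      have hb := b.isLt
      have ha := a.isLt
      have hne : (b : ℕ) ≠ (a : ℕ) := fun h => hab (Fin.ext h.symm)
      rw [hd] at hdk
      have hb' : ((b : ℕ) : ℤ) < N := by exact_mod_cast hb
      have ha' : ((a : ℕ) : ℤ) < N := by exact_mod_cast ha
      have hb0 : (0 : ℤ) ≤ ((b : ℕ) : ℤ) := Int.natCast_nonneg _
      have ha0 : (0 : ℤ) ≤ ((a : ℕ) : ℤ) := Int.natCast_nonneg _
      have hN' : (0 : ℤ) < N := by exact_mod_cast hN
      have hne' : ((b : ℕ) : ℤ) ≠ ((a : ℕ) : ℤ) := by exact_mod_cast hne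
      rcases lt_trichotomy k 0 with h | h | h
      · have hk1 : k ≤ -1 := by omega
        nlinarith
      · rw [h] at hdk; simp at hdk; omega
      · have hk1 : 1 ≤ k := by omega
        nlinarith
    rw [geom_sum_eq hζ1, hζN]
    simp

lemma dft_col_norm (N M : ℕ) (hN : 0 < N) (W : Matrix (Fin N) (Fin N) ℂ)
    (hW : ∀ n k : Fin N,
      W n k = Complex.exp (-(2 * Real.pi * Complex.I * (n : ℕ) * (k : ℕ)) / (N : ℂ)))
    (B : Matrix (Fin N) (Fin M) ℂ) (j : Fin M) :
    ∑ i, Complex.normSq ((W * B) i j) = N * ∑ n, Complex.normSq (B n j) := by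
  have key : ∑ i, ((W * B) i j * (starRingEnd ℂ) ((W * B) i j))
      = (N : ℂ) * ∑ n, (B n j * (starRingEnd ℂ) (B n j)) := by
    have hexp : ∀ i, (W * B) i j * (starRingEnd ℂ) ((W * B) i j)
        = ∑ n, ∑ n', (B n j * (starRingEnd ℂ) (B n' j)) * (W i n * (starRingEnd ℂ) (W i n')) := by
      intro i
      rw [Matrix.mul_apply, map_sum, Finset.sum_mul_sum]
      refine Finset.sum_congr rfl fun n _ => Finset.sum_congr rfl fun n' _ => ?_
      simp only [map_mul]
      ring
    simp_rw [hexp]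
    rw [Finset.sum_comm]
    have : ∀ n : Fin N, ∑ i, ∑ n', (B n j * (starRingEnd ℂ) (B n' j)) * (W i n * (starRingEnd ℂ) (W i n'))
        = B n j * (starRingEnd ℂ) (B n j) * N := by
      intro n
      rw [Finset.sum_comm]
      have h1 : ∀ n' : Fin N, ∑ i, (B n j * (starRingEnd ℂ) (B n' j)) * (W i n * (starRingEnd ℂ) (W i n'))
          = (B n j * (starRingEnd ℂ) (B n' j)) * (if n = n' then (N : ℂ) else 0) := by
        intro n'
        rw [← Finset.mul_sum, dft_orth N hN W hW n n']
      simp_rw [h1, mul_ite, mul_zero]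
      rw [Finset.sum_ite_eq]
      simp
    simp_rw [this]
    rw [← Finset.sum_mul]
    ring
  have lhs' : ∑ i, ((W * B) i j * (starRingEnd ℂ) ((W * B) i j))
      = ((∑ i, Complex.normSq ((W * B) i j) : ℝ) : ℂ) := by
    push_cast
    simp_rw [Complex.mul_conj]
  have rhs' : ∑ n, (B n j * (starRingEnd ℂ) (B n j)) = ((∑ n, Complex.normSq (B n j) : ℝ) : ℂ) := by
    push_cast
    simp_rw [Complex.mul_conj]
  rw [lhs', rhs'] at key
  exact_mod_cast key

lemma sel_col (N M : ℕ) (A : Matrix (Fin N) (Fin M) ℝ)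
    (hbin : ∀ n m, A n m = 0 ∨ A n m = 1)
    (hC1 : ∀ m, ∑ n, A n m = 1)
    (hC2 : ∀ n, ∑ m, A n m ≤ 1)
    (Ac : Matrix (Fin N) (Fin M) ℂ) (hAc : ∀ n m, Ac n m = (A n m : ℂ))
    (U : Matrix (Fin M) (Fin M) ℂ) (j : Fin M) :
    ∑ n, Complex.normSq ((Ac * U) n j) ≤ ∑ m, Complex.normSq (U m j) := by
  have hnn : ∀ n m, 0 ≤ A n m := by
    intro n m; rcases hbin n m with h | h <;> simp [h]
  have hrow : ∀ n, Complex.normSq ((Ac * U) n j) ≤ ∑ m, A n m * Complex.normSq (U m j) := by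
    intro n
    by_cases hex : ∃ m0, A n m0 = 1
    · obtain ⟨m0, hm0⟩ := hex
      have hz : ∀ m, m ≠ m0 → A n m = 0 := by
        intro m hm
        rcases hbin n m with h | h
        · exact h
        · exfalso
          have hle := hC2 n
          have hsub : ∑ m' ∈ ({m0, m} : Finset (Fin M)), A n m' ≤ ∑ m', A n m' :=
            Finset.sum_le_sum_of_subset_of_nonneg (Finset.subset_univ _)
              (fun i _ _ => hnn n i)
          rw [Finset.sum_pair (Ne.symm hm)] at hsub
          rw [hm0, h] at hsub
          linarith
      have hval : (Ac * U) n j = U m0 j := by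
        rw [Matrix.mul_apply]
        rw [Finset.sum_eq_single m0]
        · rw [hAc, hm0]; simp
        · intro m _ hm; rw [hAc, hz m hm]; simp
        · intro h; exact absurd (Finset.mem_univ m0) h
      have hrhs : ∑ m, A n m * Complex.normSq (U m j) = Complex.normSq (U m0 j) := by
        rw [Finset.sum_eq_single m0]
        · rw [hm0]; simp
        · intro m _ hm; rw [hz m hm]; simp
        · intro h; exact absurd (Finset.mem_univ m0) h
      rw [hval, hrhs]
    · push_neg at hex
      have hz : ∀ m, A n m = 0 := by
        intro m; rcases hbin n m with h | h
        · exact h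
        · exact absurd h (hex m)
      have hval : (Ac * U) n j = 0 := by
        rw [Matrix.mul_apply]
        apply Finset.sum_eq_zero
        intro m _; rw [hAc, hz m]; simp
      rw [hval]
      simp only [map_zero]
      apply Finset.sum_nonneg
      intro m _
      exact mul_nonneg (hnn n m) (Complex.normSq_nonneg _)
  calc ∑ n, Complex.normSq ((Ac * U) n j) ≤ ∑ n, ∑ m, A n m * Complex.normSq (U m j) :=
        Finset.sum_le_sum fun n _ => hrow n
    _ = ∑ m, (∑ n, A n m) * Complex.normSq (U m j) := by
        rw [Finset.sum_comm]
        simp_rw [← Finset.sum_mul]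
    _ = ∑ m, Complex.normSq (U m j) := by
        refine Finset.sum_congr rfl fun m _ => ?_
        rw [hC1 m, one_mul]

lemma power_bound (N M : ℕ) (hN : 0 < N) (P : ℝ)
    (W : Matrix (Fin N) (Fin N) ℂ) (Ac : Matrix (Fin N) (Fin M) ℂ)
    (U : Matrix (Fin M) (Fin M) ℂ)
    (hpow : ((U.conjTranspose * U).trace).re ≤ P)
    (hsel : ∀ j, ∑ n, Complex.normSq ((Ac * U) n j) ≤ ∑ m, Complex.normSq (U m j))
    (hdft : ∀ (B : Matrix (Fin N) (Fin M) ℂ) (j : Fin M),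
      ∑ i, Complex.normSq ((W * B) i j) = N * ∑ n, Complex.normSq (B n j))
    (h : Fin N → ℂ) (q : Fin M → ℂ)
    (hq : ∀ j, q j = ∑ i, (starRingEnd ℂ) (h i) * (W * Ac * U) i j) :
    ∑ j, ‖q j‖ ^ 2 ≤ (N : ℝ) * (∑ i, ‖h i‖ ^ 2) * P := by
  set H : ℝ := ∑ i, ‖h i‖ ^ 2 with hH
  have hHnn : 0 ≤ H := Finset.sum_nonneg fun i _ => sq_nonneg _
  have htr : ∑ j, ∑ k, Complex.normSq (U k j) = ((U.conjTranspose * U).trace).re := by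
    rw [Matrix.trace, Complex.re_sum]
    refine Finset.sum_congr rfl fun j _ => ?_
    rw [Matrix.diag_apply, Matrix.mul_apply, Complex.re_sum]
    refine Finset.sum_congr rfl fun k _ => ?_
    rw [Matrix.conjTranspose_apply, mul_comm,
      show star (U k j) = (starRingEnd ℂ) (U k j) from rfl, Complex.mul_conj,
      Complex.ofReal_re]
  have hCS : ∀ j, ‖q j‖ ^ 2 ≤ H * ∑ i, Complex.normSq ((W * Ac * U) i j) := by
    intro j
    have h1 : ‖q j‖ ≤ ∑ i, ‖h i‖ * ‖(W * Ac * U) i j‖ := by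
      rw [hq]
      refine le_trans (norm_sum_le _ _) (le_of_eq ?_)
      refine Finset.sum_congr rfl fun i _ => ?_
      rw [norm_mul, Complex.norm_conj]
    have h2 : (∑ i, ‖h i‖ * ‖(W * Ac * U) i j‖) ^ 2
        ≤ (∑ i, ‖h i‖ ^ 2) * ∑ i, ‖(W * Ac * U) i j‖ ^ 2 :=
      Finset.sum_mul_sq_le_sq_mul_sq _ _ _
    have h3 : ‖q j‖ ^ 2 ≤ (∑ i, ‖h i‖ * ‖(W * Ac * U) i j‖) ^ 2 := by
      apply pow_le_pow_left₀ (norm_nonneg _) h1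
    refine le_trans h3 (le_trans h2 (le_of_eq ?_))
    rw [← hH]
    congr 1
    exact Finset.sum_congr rfl fun i _ => Complex.sq_norm _
  calc ∑ j, ‖q j‖ ^ 2
      ≤ ∑ j, H * ∑ i, Complex.normSq ((W * Ac * U) i j) := Finset.sum_le_sum fun j _ => hCS j
    _ = H * ∑ j, ∑ i, Complex.normSq ((W * (Ac * U)) i j) := by
        rw [← Finset.mul_sum, Matrix.mul_assoc]
    _ = H * ∑ j, ((N : ℝ) * ∑ n, Complex.normSq ((Ac * U) n j)) := by
        rw [Finset.sum_congr rfl fun j _ => hdft (Ac * U) j]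
    _ ≤ H * ∑ j, ((N : ℝ) * ∑ m, Complex.normSq (U m j)) := by
        apply mul_le_mul_of_nonneg_left _ hHnn
        apply Finset.sum_le_sum
        intro j _
        exact mul_le_mul_of_nonneg_left (hsel j) (Nat.cast_nonneg N)
    _ = (N : ℝ) * H * ((U.conjTranspose * U).trace).re := by
        rw [← htr, ← Finset.mul_sum]
        ring
    _ ≤ (N : ℝ) * H * P := by
        apply mul_le_mul_of_nonneg_left hpow
        positivity

lemma per_m (X : ℝ) (hX : 0 ≤ X) (qmm : ℂ) (c : ℝ) (hc0 : 0 < c)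
    (hK : ‖qmm‖ ^ 2 + c ≤ c * (1 + X))
    (δ : ℂ) (ω : ℝ) (hω : 0 < ω) :
    -Real.log (1 + X) ≤
      ω * (‖1 - δ * qmm‖ ^ 2 + ‖δ‖ ^ 2 * c) - Real.log ω - 1 := by
  set a : ℝ := ‖qmm‖ with ha
  set d : ℝ := ‖δ‖ with hd
  set B : ℝ := ‖1 - δ * qmm‖ with hB
  set e : ℝ := B ^ 2 + d ^ 2 * c with he
  set K : ℝ := a ^ 2 + c with hKdef
  have ha0 : 0 ≤ a := norm_nonneg _
  have hd0 : 0 ≤ d := norm_nonneg _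
  have hB0 : 0 ≤ B := norm_nonneg _
  have hK0 : 0 < K := by positivity
  have h1X : 0 < 1 + X := by linarith
  have hdq : ‖δ * qmm‖ = d * a := by rw [norm_mul]
  have htri1 : 1 - d * a ≤ B := by
    have h := norm_add_le (1 - δ * qmm) (δ * qmm)
    simp only [sub_add_cancel, norm_one] at h
    rw [hdq] at h
    linarith
  have htri2 : d * a - 1 ≤ B := by
    have h := norm_add_le (δ * qmm - 1) 1
    simp only [sub_add_cancel, norm_one] at h
    rw [show ‖δ * qmm - 1‖ = ‖1 - δ * qmm‖ from
      norm_sub_rev _ _] at h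
    rw [hdq] at h
    linarith
  have he1 : (1 - d * a) ^ 2 ≤ B ^ 2 := by nlinarith
  have heK : c ≤ e * K := by
    rw [he, hKdef]
    nlinarith [sq_nonneg (d * (a ^ 2 + c) - a),
      mul_le_mul_of_nonneg_right he1 (show (0:ℝ) ≤ a ^ 2 + c by positivity)]
  have hinv : 1 / (1 + X) ≤ e := by
    rw [div_le_iff₀ h1X]
    have h2 : K ≤ c * (1 + X) := hK
    have h3 : c / K ≤ e := by
      rw [div_le_iff₀ hK0]; exact heK
    calc (1 : ℝ) = K / K := by field_simp
      _ ≤ (c * (1 + X)) / K := by gcongr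
      _ = (c / K) * (1 + X) := by ring
      _ ≤ e * (1 + X) := mul_le_mul_of_nonneg_right h3 h1X.le
  have hepos : 0 < e := lt_of_lt_of_le (by positivity) hinv
  have hlog1 : Real.log (1 / (1 + X)) ≤ Real.log e := Real.log_le_log (by positivity) hinv
  rw [one_div, Real.log_inv] at hlog1
  have hlog2 : Real.log (ω * e) ≤ ω * e - 1 := Real.log_le_sub_one_of_pos (mul_pos hω hepos)
  rw [Real.log_mul hω.ne' hepos.ne'] at hlog2
  linarith

/-- Lower bound for the weighted-MMSE objective over the feasible set. With `W` the
`N`-point DFT matrix, `A` a 0/1 assignment matrix with (C1), (C2), `U` a precoder with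
`trace(UᴴU) ≤ P`, effective channels `h̃_m`, coefficients `q_{m,j} = h̃_mᴴ W A u_j`,
`c_m = ∑_{j≠m}|q_{m,j}|² + σ²`, and `e_m(δ) = |1 − δ q_{m,m}|² + |δ|² c_m`, for every
`δ ∈ ℂ^M` and positive `ω ∈ ℝ^M`,
`∑_m (ω_m e_m(δ_m) − log ω_m − 1) ≥ −∑_m log(1 + N‖h̃_m‖²P/σ²)`. -/
theorem stmt_12 (N M : ℕ) (hM : 1 ≤ M) (hNM : M ≤ N) (σ P : ℝ) (hσ : 0 < σ) (hP : 0 < P)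
    (W : Matrix (Fin N) (Fin N) ℂ)
    (hW : ∀ n k : Fin N,
      W n k = Complex.exp (-(2 * Real.pi * Complex.I * (n : ℕ) * (k : ℕ)) / (N : ℂ)))
    (A : Matrix (Fin N) (Fin M) ℝ)
    (hbin : ∀ n m, A n m = 0 ∨ A n m = 1)
    (hC1 : ∀ m, ∑ n, A n m = 1)
    (hC2 : ∀ n, ∑ m, A n m ≤ 1)
    (Ac : Matrix (Fin N) (Fin M) ℂ) (hAc : ∀ n m, Ac n m = (A n m : ℂ))
    (U : Matrix (Fin M) (Fin M) ℂ)
    (hpow : ((U.conjTranspose * U).trace).re ≤ P)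
    (htilde : Fin M → Fin N → ℂ)
    (q : Fin M → Fin M → ℂ)
    (hq : ∀ m j, q m j = ∑ i, (starRingEnd ℂ) (htilde m i) * (W * Ac * U) i j)
    (c : Fin M → ℝ)
    (hc : ∀ m, c m = ∑ j ∈ univ.erase m, ‖q m j‖ ^ 2 + σ ^ 2)
    (e : Fin M → ℂ → ℝ)
    (he : ∀ m δ, e m δ = ‖1 - δ * q m m‖ ^ 2 + ‖δ‖ ^ 2 * c m) :
    ∀ (δ : Fin M → ℂ) (ω : Fin M → ℝ), (∀ m, 0 < ω m) →
      -∑ m, Real.log (1 + (N : ℝ) * (∑ i, ‖htilde m i‖ ^ 2) * P / σ ^ 2) ≤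
        ∑ m, (ω m * e m (δ m) - Real.log (ω m) - 1) := by
  intro δ ω hω
  have hN : 0 < N := lt_of_lt_of_le hM hNM
  rw [← Finset.sum_neg_distrib]
  apply Finset.sum_le_sum
  intro m _
  set H : ℝ := ∑ i, ‖htilde m i‖ ^ 2 with hHdef
  have hHnn : 0 ≤ H := Finset.sum_nonneg fun i _ => sq_nonneg _
  set X : ℝ := (N : ℝ) * H * P / σ ^ 2 with hXdef
  have hX : 0 ≤ X := by positivity
  have hQ : ∑ j, ‖q m j‖ ^ 2 ≤ (N : ℝ) * H * P :=
    power_bound N M hN P W Ac U hpow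
      (fun j => sel_col N M A hbin hC1 hC2 Ac hAc U j)
      (fun B j => dft_col_norm N M hN W hW B j)
      (htilde m) (q m) (fun j => hq m j)
  have ha2 : ‖q m m‖ ^ 2 ≤ ∑ j, ‖q m j‖ ^ 2 :=
    Finset.single_le_sum (f := fun j => ‖q m j‖ ^ 2)
      (fun j _ => sq_nonneg _) (Finset.mem_univ m)
  have hsum_split : ‖q m m‖ ^ 2 + ∑ j ∈ univ.erase m, ‖q m j‖ ^ 2
      = ∑ j, ‖q m j‖ ^ 2 :=
    Finset.add_sum_erase univ (fun j => ‖q m j‖ ^ 2) (Finset.mem_univ m)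
  have hcσ : σ ^ 2 ≤ c m := by
    rw [hc]
    have : (0 : ℝ) ≤ ∑ j ∈ univ.erase m, ‖q m j‖ ^ 2 :=
      Finset.sum_nonneg fun j _ => sq_nonneg _
    linarith
  have hc0 : 0 < c m := lt_of_lt_of_le (by positivity) hcσ
  have hσ2X : σ ^ 2 * X = (N : ℝ) * H * P := by
    rw [hXdef]; field_simp
  have hKb : ‖q m m‖ ^ 2 + c m ≤ c m * (1 + X) := by
    have h1 : ‖q m m‖ ^ 2 ≤ σ ^ 2 * X := by
      rw [hσ2X]; exact le_trans ha2 hQ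
    nlinarith [mul_le_mul_of_nonneg_right hcσ hX]
  have key := per_m X hX (q m m) (c m) hc0 hKb (δ m) (ω m) (hω m)
  rw [he]
  exact key
end
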